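/- For a finitely-supported joint pmf p(x,y) with strictly positive marginals, the discrete Adaptive Mutual Information with φ ≡ 1, I₁(X;Y) = Σ_{x,y} p(x)p(y) g(p(x,y)/(p(x)p(y))) with g(t) = (t-1)^2/(2(t+1)), satisfies 0 ≤ I₁(X;Y) ≤ 1. -/

import Mathlib

theorem discrete_ami_phi_one_bounds {α β : Type*} [Fintype α] [Fintype β]
    (p : α → β → ℝ) (hp0 : ∀ x y, 0 ≤ p x y) (hp1 : ∑ x, ∑ y, p x y = 1)
    (px : α → ℝ) (py : β → ℝ)
    (hpx : ∀ x, px x = ∑ y, p x y) (hpy : ∀ y, py y = ∑ x, p x y)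
    (hpx0 : ∀ x, 0 < px x) (hpy0 : ∀ y, 0 < py y)
    (g : ℝ → ℝ) (hg : ∀ t : ℝ, g t = (t - 1)^2 / (2 * (t + 1))) :
    0 ≤ ∑ x, ∑ y, px x * py y * g (p x y / (px x * py y)) ∧
      ∑ x, ∑ y, px x * py y * g (p x y / (px x * py y)) ≤ 1 := by
  have hsx : ∑ x, px x = 1 := by
    simp only [hpx]; exact hp1
  have hsy : ∑ y, py y = 1 := by
    simp only [hpy]; rw [Finset.sum_comm]; exact hp1
  have hterm : ∀ x y, 0 ≤ px x * py y * g (p x y / (px x * py y)) ∧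
      px x * py y * g (p x y / (px x * py y)) ≤ (p x y + px x * py y) / 2 := by
    intro x y
    set t := p x y / (px x * py y) with ht
    have hm : 0 < px x * py y := mul_pos (hpx0 x) (hpy0 y)
    have ht0 : 0 ≤ t := div_nonneg (hp0 x y) hm.le
    have ht1 : 0 < t + 1 := by linarith
    have hg0 : 0 ≤ g t := by
      rw [hg]; positivity
    constructor
    · exact mul_nonneg hm.le hg0
    · have hgle : g t ≤ (t + 1) / 2 := by
        rw [hg]
        rw [div_le_div_iff₀ (by linarith) (by norm_num)]
        nlinarith
      have hmt : px x * py y * t = p x y := by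
        rw [ht]; field_simp [(hpx0 x).ne', (hpy0 y).ne']
      calc px x * py y * g t ≤ px x * py y * ((t + 1) / 2) :=
            mul_le_mul_of_nonneg_left hgle hm.le
        _ = (p x y + px x * py y) / 2 := by rw [← hmt]; ring
  constructor
  · apply Finset.sum_nonneg; intro x _
    apply Finset.sum_nonneg; intro y _
    exact (hterm x y).1
  · calc ∑ x, ∑ y, px x * py y * g (p x y / (px x * py y))
        ≤ ∑ x, ∑ y, (p x y + px x * py y) / 2 := by
          apply Finset.sum_le_sum; intro x _
          apply Finset.sum_le_sum; intro y _
          exact (hterm x y).2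
      _ = 1 := by
          have : ∑ x, ∑ y, (p x y + px x * py y) / 2
              = ((∑ x, ∑ y, p x y) + (∑ x, px x) * (∑ y, py y)) / 2 := by
            rw [Finset.sum_mul_sum]
            simp only [← Finset.sum_div, ← Finset.sum_add_distrib]
          rw [this, hp1, hsx, hsy]; norm_num
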